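/- Let λ ≠ 0 and δ > 0. Set β_λ = (1/2)(2+λ²+|λ|√(λ²+4)), α_λ = (1/2)(2+λ²−|λ|√(λ²+4)), q_λ = |λ|√(λ²+4), and r_λ = q_λ + λ² + |λ|δ/√(λ²+4). If a ≥ 0 satisfies β_λ ≤ a² ≤ β_λ + δ, then a²(a² − 1 + |λ|a) ≤ a²(a² − β_λ + r_λ). -/

import Mathlib

theorem F_upper_bound (l δ a : ℝ) (hl : l ≠ 0) (hδ : 0 < δ) (ha : 0 ≤ a)
    (β r : ℝ)
    (hβ : β = (1/2) * (2 + l^2 + |l| * Real.sqrt (l^2 + 4)))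
    (hr : r = |l| * Real.sqrt (l^2 + 4) + l^2 + |l| * δ / Real.sqrt (l^2 + 4))
    (h1 : β ≤ a ^ 2) (h2 : a ^ 2 ≤ β + δ) :
    a ^ 2 * (a ^ 2 - 1 + |l| * a) ≤ a ^ 2 * (a ^ 2 - β + r) := by
  set s := Real.sqrt (l^2 + 4) with hs
  have hs2 : s ^ 2 = l ^ 2 + 4 := Real.sq_sqrt (by positivity)
  have hsge : (2:ℝ) ≤ s := by
    nlinarith [Real.sqrt_nonneg (l^2+4)]
  have hl0 : 0 < |l| := abs_pos.mpr hl
  have hspos : (0:ℝ) < s := by linarith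
  have key : a ≤ (|l| + s) / 2 + δ / s := by
    have hrhs : 0 ≤ (|l| + s) / 2 + δ / s := by positivity
    have hsq : a ^ 2 ≤ ((|l| + s) / 2 + δ / s) ^ 2 := by
      have : ((|l| + s) / 2 + δ / s) ^ 2 = β + ((|l| + s) * δ / s + δ^2 / s^2) := by
        rw [hβ]
        field_simp
        linear_combination s^2*hs2 + s^2*(sq_abs l)
      rw [this]
      have h3 : δ ≤ (|l| + s) * δ / s := by
        rw [le_div_iff₀ hspos]
        nlinarith
      have hd : 0 ≤ δ^2 / s^2 := by positivity
      linarith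
    nlinarith
  have h4 : |l| * a ≤ r - β + 1 := by
    have : r - β + 1 = |l| * ((|l| + s) / 2 + δ / s) := by
      rw [hr, hβ]
      field_simp
      linear_combination (-s)*(sq_abs l)
    rw [this]
    exact mul_le_mul_of_nonneg_left key (le_of_lt hl0)
  nlinarith [sq_nonneg a]
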